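/- Let q: ℝ → ℝ be C¹ with q̇ satisfying q̇(ξ,t) = ½∫_ℝ e^{−|q(ξ,t)−q(η,t)|} p(η,t)dη and p satisfying ṗ(ξ,t) = ½ p(ξ,t)∫_ℝ sgn(ξ−η) e^{−|q(ξ,t)−q(η,t)|} p(η,t)dη, with p(·,t) > 0 and q(·,t) strictly increasing. Then K(ξ,η;t) = ½ e^{−|q(ξ,t)−q(η,t)|/2} √(p(ξ,t)p(η,t)) satisfies the integro-differential equation K̇(ξ,η;t) = ∫_{−∞}^{ξ} K(ξ,ζ;t)K(ζ,η;t)dζ − ∫_{η}^{∞} K(ξ,ζ;t)K(ζ,η;t)dζ (pointwise, for ξ ≤ η). -/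

import Mathlib

open MeasureTheory

noncomputable section

/-- The kernel `K(ξ,η;t) = ½ e^{−|q(ξ,t)−q(η,t)|/2} √(p(ξ,t)p(η,t))`. -/
def chLagKer (q p : ℝ → ℝ → ℝ) (ξ η t : ℝ) : ℝ :=
  (1 / 2) * Real.exp (-|q ξ t - q η t| / 2) * Real.sqrt (p ξ t * p η t)

lemma measurable_realSign : Measurable Real.sign := by
  unfold Real.sign
  exact Measurable.ite measurableSet_Iio measurable_const
    (Measurable.ite measurableSet_Ioi measurable_const measurable_const)

lemma sign_integral_split (a : ℝ) (f : ℝ → ℝ) (hf : Integrable f (volume : Measure ℝ)) :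
    ∫ ζ : ℝ, Real.sign (a - ζ) * f ζ =
      (∫ ζ in Set.Iic a, f ζ) - ∫ ζ in Set.Ioi a, f ζ := by
  have hmeas : Measurable fun ζ : ℝ => Real.sign (a - ζ) :=
    measurable_realSign.comp (measurable_const.sub measurable_id)
  have hint2 : Integrable (fun ζ => Real.sign (a - ζ) * f ζ) (volume : Measure ℝ) := by
    apply hf.bdd_mul (c := 1) hmeas.aestronglyMeasurable
    refine Filter.Eventually.of_forall (fun ζ => ?_)
    rcases Real.sign_apply_eq (a - ζ) with h | h | h <;> simp [h]
  rw [← intervalIntegral.integral_Iic_add_Ioi hint2.integrableOn hint2.integrableOn]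
  have h1 : (∫ ζ in Set.Iic a, Real.sign (a - ζ) * f ζ) = ∫ ζ in Set.Iic a, f ζ := by
    rw [MeasureTheory.integral_Iic_eq_integral_Iio, MeasureTheory.integral_Iic_eq_integral_Iio]
    apply MeasureTheory.setIntegral_congr_fun measurableSet_Iio
    intro ζ hζ
    show Real.sign (a - ζ) * f ζ = _
    rw [Real.sign_of_pos (sub_pos.mpr hζ), one_mul]
  have h2 : (∫ ζ in Set.Ioi a, Real.sign (a - ζ) * f ζ) = - ∫ ζ in Set.Ioi a, f ζ := by
    rw [← MeasureTheory.integral_neg]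
    apply MeasureTheory.setIntegral_congr_fun measurableSet_Ioi
    intro ζ hζ
    show Real.sign (a - ζ) * f ζ = -f ζ
    rw [Real.sign_of_neg (sub_neg.mpr hζ)]
    ring
  rw [h1, h2]
  ring


lemma chLag_exp_aux (a b c d s1 s2 s3 w : ℝ) (h1 : a + b = c + d) (h2 : s1 * s2 = w * s3) :
    1 / 2 * Real.exp a * s1 * (1 / 2 * Real.exp b * s2)
      = 1 / 2 * (1 / 2 * Real.exp c * s3) * (Real.exp d * w) := by
  have he : Real.exp a * Real.exp b = Real.exp c * Real.exp d := by
    rw [← Real.exp_add, ← Real.exp_add, h1]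
  calc 1 / 2 * Real.exp a * s1 * (1 / 2 * Real.exp b * s2)
      = 1 / 4 * (Real.exp a * Real.exp b) * (s1 * s2) := by ring
    _ = 1 / 4 * (Real.exp c * Real.exp d) * (w * s3) := by rw [he, h2]
    _ = 1 / 2 * (1 / 2 * Real.exp c * s3) * (Real.exp d * w) := by ring

/-- if `q`, `p` evolve by the Lagrangian Camassa-Holm (characteristic)
equations, then `K(ξ,η;t) = ½ e^{−|qξ−qη|/2} √(pξ pη)` satisfies
`K̇ = ∫_{−∞}^{ξ} K(ξ,ζ)K(ζ,η)dζ − ∫_{η}^{∞} K(ξ,ζ)K(ζ,η)dζ` for `ξ ≤ η`. -/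
theorem camassaHolm_kernel_evolution
    (q p : ℝ → ℝ → ℝ)
    (hppos : ∀ ξ t : ℝ, 0 < p ξ t)
    (hmono : ∀ t : ℝ, StrictMono fun ξ => q ξ t)
    (hint : ∀ ξ t : ℝ,
      Integrable (fun η => Real.exp (-|q ξ t - q η t|) * p η t) (volume : Measure ℝ))
    (hq : ∀ ξ t : ℝ, HasDerivAt (fun s => q ξ s)
      ((1 / 2) * ∫ η : ℝ, Real.exp (-|q ξ t - q η t|) * p η t) t)
    (hp : ∀ ξ t : ℝ, HasDerivAt (fun s => p ξ s)
      ((1 / 2) * p ξ t *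
        ∫ η : ℝ, Real.sign (ξ - η) * Real.exp (-|q ξ t - q η t|) * p η t) t) :
    ∀ ξ η t : ℝ, ξ ≤ η →
      HasDerivAt (fun s => chLagKer q p ξ η s)
        ((∫ ζ in Set.Iic ξ, chLagKer q p ξ ζ t * chLagKer q p ζ η t) -
          ∫ ζ in Set.Ioi η, chLagKer q p ξ ζ t * chLagKer q p ζ η t) t := by
  intro ξ η t hξη
  have hqle : ∀ (a b s : ℝ), a ≤ b → q a s ≤ q b s := fun a b s h => (hmono s).monotone h
  -- integrals of fξ, fη over half-lines
  set A : ℝ := ∫ ζ in Set.Iic ξ, Real.exp (-|q ξ t - q ζ t|) * p ζ t with hA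
  set A' : ℝ := ∫ ζ in Set.Ioi ξ, Real.exp (-|q ξ t - q ζ t|) * p ζ t with hA'
  set C : ℝ := ∫ ζ in Set.Iic η, Real.exp (-|q η t - q ζ t|) * p ζ t with hC
  set B : ℝ := ∫ ζ in Set.Ioi η, Real.exp (-|q η t - q ζ t|) * p ζ t with hB
  have hsplitξ : (∫ ζ : ℝ, Real.exp (-|q ξ t - q ζ t|) * p ζ t) = A + A' :=
    (intervalIntegral.integral_Iic_add_Ioi (hint ξ t).integrableOn (hint ξ t).integrableOn).symm
  have hsplitη : (∫ ζ : ℝ, Real.exp (-|q η t - q ζ t|) * p ζ t) = C + B :=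
    (intervalIntegral.integral_Iic_add_Ioi (hint η t).integrableOn (hint η t).integrableOn).symm
  have hsignξ : (∫ ζ : ℝ, Real.sign (ξ - ζ) * Real.exp (-|q ξ t - q ζ t|) * p ζ t) = A - A' := by
    simp only [mul_assoc]
    exact sign_integral_split ξ _ (hint ξ t)
  have hsignη : (∫ ζ : ℝ, Real.sign (η - ζ) * Real.exp (-|q η t - q ζ t|) * p ζ t) = C - B := by
    simp only [mul_assoc]
    exact sign_integral_split η _ (hint η t)
  -- derivative hypotheses with rewritten values
  have hqξ : HasDerivAt (fun s => q ξ s) ((1 / 2) * (A + A')) t := by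
    have := hq ξ t; rwa [hsplitξ] at this
  have hqη : HasDerivAt (fun s => q η s) ((1 / 2) * (C + B)) t := by
    have := hq η t; rwa [hsplitη] at this
  have hpξ : HasDerivAt (fun s => p ξ s) ((1 / 2) * p ξ t * (A - A')) t := by
    have := hp ξ t; rwa [hsignξ] at this
  have hpη : HasDerivAt (fun s => p η s) ((1 / 2) * p η t * (C - B)) t := by
    have := hp η t; rwa [hsignη] at this
  -- basic positivity
  have hpξt := hppos ξ t
  have hpηt := hppos η t
  have hsne : Real.sqrt (p ξ t * p η t) ≠ 0 :=
    ne_of_gt (Real.sqrt_pos.mpr (mul_pos hpξt hpηt))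
  have hs2 : Real.sqrt (p ξ t * p η t) * Real.sqrt (p ξ t * p η t) = p ξ t * p η t :=
    Real.mul_self_sqrt (mul_pos hpξt hpηt).le
  -- rewrite the kernel without abs
  have hKfun : (fun s => chLagKer q p ξ η s)
      = fun s => (1 / 2) * (Real.exp ((q ξ s - q η s) / 2) * Real.sqrt (p ξ s * p η s)) := by
    funext s
    have : -|q ξ s - q η s| / 2 = (q ξ s - q η s) / 2 := by
      rw [abs_of_nonpos (sub_nonpos.mpr (hqle ξ η s hξη))]; ring
    rw [chLagKer, this]; ring
  -- derivative of the kernel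
  have hg : HasDerivAt (fun s => (q ξ s - q η s) / 2)
      (((1 / 2) * (A + A') - (1 / 2) * (C + B)) / 2) t := (hqξ.sub hqη).div_const 2
  have hexp : HasDerivAt (fun s => Real.exp ((q ξ s - q η s) / 2))
      (Real.exp ((q ξ t - q η t) / 2) * (((1 / 2) * (A + A') - (1 / 2) * (C + B)) / 2)) t :=
    hg.exp
  have hmder : HasDerivAt (fun s => p ξ s * p η s)
      ((1 / 2) * p ξ t * (A - A') * p η t + p ξ t * ((1 / 2) * p η t * (C - B))) t :=
    hpξ.mul hpη
  have hsq : HasDerivAt (fun s => Real.sqrt (p ξ s * p η s))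
      (((1 / 2) * p ξ t * (A - A') * p η t + p ξ t * ((1 / 2) * p η t * (C - B)))
        / (2 * Real.sqrt (p ξ t * p η t))) t :=
    hmder.sqrt (ne_of_gt (mul_pos hpξt hpηt))
  have hKder := (hexp.mul hsq).const_mul (1 / 2 : ℝ)
  rw [hKfun]
  -- now compute the two set integrals
  have hKval : chLagKer q p ξ η t
      = (1 / 2) * Real.exp ((q ξ t - q η t) / 2) * Real.sqrt (p ξ t * p η t) := by
    have := congrFun hKfun t
    rw [this]; ring
  have key1 : ∀ ζ ∈ Set.Iic ξ, chLagKer q p ξ ζ t * chLagKer q p ζ η t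
      = ((1 / 2) * chLagKer q p ξ η t) * (Real.exp (-|q ξ t - q ζ t|) * p ζ t) := by
    intro ζ hζ
    have hζξ : ζ ≤ ξ := hζ
    have hsqrt : Real.sqrt (p ξ t * p ζ t) * Real.sqrt (p ζ t * p η t)
        = p ζ t * Real.sqrt (p ξ t * p η t) := by
      rw [← Real.sqrt_mul (mul_pos hpξt (hppos ζ t)).le,
        show p ξ t * p ζ t * (p ζ t * p η t) = (p ζ t) ^ 2 * (p ξ t * p η t) by ring,
        Real.sqrt_mul (sq_nonneg _), Real.sqrt_sq (hppos ζ t).le]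
    rw [chLagKer, chLagKer, hKval,
      abs_of_nonneg (sub_nonneg.mpr (hqle ζ ξ t hζξ)),
      abs_of_nonpos (sub_nonpos.mpr (hqle ζ η t (hζξ.trans hξη)))]
    exact chLag_exp_aux _ _ _ _ _ _ _ _ (by ring) hsqrt
  have key2 : ∀ ζ ∈ Set.Ioi η, chLagKer q p ξ ζ t * chLagKer q p ζ η t
      = ((1 / 2) * chLagKer q p ξ η t) * (Real.exp (-|q η t - q ζ t|) * p ζ t) := by
    intro ζ hζ
    have hηζ : η ≤ ζ := le_of_lt hζ
    have hsqrt : Real.sqrt (p ξ t * p ζ t) * Real.sqrt (p ζ t * p η t)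
        = p ζ t * Real.sqrt (p ξ t * p η t) := by
      rw [← Real.sqrt_mul (mul_pos hpξt (hppos ζ t)).le,
        show p ξ t * p ζ t * (p ζ t * p η t) = (p ζ t) ^ 2 * (p ξ t * p η t) by ring,
        Real.sqrt_mul (sq_nonneg _), Real.sqrt_sq (hppos ζ t).le]
    rw [chLagKer, chLagKer, hKval,
      abs_of_nonpos (sub_nonpos.mpr (hqle ξ ζ t (hξη.trans hηζ))),
      abs_of_nonneg (sub_nonneg.mpr (hqle η ζ t hηζ)),
      abs_of_nonpos (sub_nonpos.mpr (hqle η ζ t hηζ))]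
    exact chLag_exp_aux _ _ _ _ _ _ _ _ (by ring) hsqrt
  have hI1 : (∫ ζ in Set.Iic ξ, chLagKer q p ξ ζ t * chLagKer q p ζ η t)
      = (1 / 2) * chLagKer q p ξ η t * A := by
    rw [MeasureTheory.setIntegral_congr_fun measurableSet_Iic key1,
      MeasureTheory.integral_const_mul]
  have hI2 : (∫ ζ in Set.Ioi η, chLagKer q p ξ ζ t * chLagKer q p ζ η t)
      = (1 / 2) * chLagKer q p ξ η t * B := by
    rw [MeasureTheory.setIntegral_congr_fun measurableSet_Ioi key2,
      MeasureTheory.integral_const_mul]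
  rw [hI1, hI2, hKval]
  set s : ℝ := Real.sqrt (p ξ t * p η t) with hsdef
  have hrw : (1 / 2 * p ξ t * (A - A') * p η t + p ξ t * (1 / 2 * p η t * (C - B)))
      = 1 / 2 * (s * s) * (A - A' + C - B) := by
    rw [hs2]; ring
  convert hKder using 1
  · rfl
  · rfl
  · rfl
  rw [hrw]
  field_simp
  ring
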